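/- Let L be a finite first-order language, M an L-structure, and v⃗ ∈ M^k a tuple whose neighbourhood N(v⃗) is finite. Then there exists a quantifier-free L-formula α with free variables among x_1,…,x_k such that for every L-structure M' and every tuple u⃗ ∈ M'^k, M' ⊨ α(u⃗) if and only if there is a local isomorphism from v⃗ to u⃗ (equivalently, if and only if qftype(M', u⃗) = qftype(M, v⃗)). In other words, the local-symmetry equivalence class of any tuple with finite neighbourhood is definable by a single quantifier-free formula. -/

import Mathlib

open FirstOrder Language Substructure

universe w

namespace LocalSym

variable {L : Language} {α : Type*} {n : ℕ}

theorem isQF_foldr_inf (l : List (L.BoundedFormula α n)) (h : ∀ φ ∈ l, φ.IsQF) :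
    (l.foldr (· ⊓ ·) ⊤).IsQF := by
  induction l with
  | nil => exact BoundedFormula.IsQF.top
  | cons a l ih =>
      exact (h a List.mem_cons_self).inf (ih fun φ hφ => h φ (List.mem_cons_of_mem a hφ))

/-- conjunction over a finset (the old finset-indexed `iInf`) -/
noncomputable def finsetInf {β : Type*} (s : Finset β) (f : β → L.BoundedFormula α n) :
    L.BoundedFormula α n :=
  (s.toList.map f).foldr (· ⊓ ·) ⊤

theorem isQF_iInf {β : Type*} (s : Finset β) (f : β → L.BoundedFormula α n)
    (h : ∀ b, (f b).IsQF) : (LocalSym.finsetInf s f).IsQF := by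
  apply isQF_foldr_inf
  intro φ hφ
  simp only [List.mem_map] at hφ
  obtain ⟨b, -, rfl⟩ := hφ
  exact h b

theorem isQF_equal (t₁ t₂ : L.Term α) : (t₁.equal t₂).IsQF :=
  (BoundedFormula.IsAtomic.equal _ _).isQF

theorem isQF_rel {l : ℕ} (R : L.Relations l) (ts : Fin l → L.Term α) :
    (R.formula ts).IsQF :=
  (BoundedFormula.IsAtomic.rel _ _).isQF

theorem realize_iInf' {β : Type*} {M : Type*} [L.Structure M] (s : Finset β)
    (f : β → L.Formula α) (u : α → M) :
    Formula.Realize (LocalSym.finsetInf s f) u ↔ ∀ b ∈ s, (f b).Realize u :=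
  by simp only [LocalSym.finsetInf, Formula.Realize, BoundedFormula.realize_foldr_inf,
    List.mem_map, Finset.mem_toList, forall_exists_index, and_imp, forall_apply_eq_imp_iff₂]

end LocalSym

/-- Over a finite language `L`, if a tuple `v` in an `L`-structure `M` has a
finite neighbourhood `N(v)` (the substructure generated by its components), then its
local-symmetry class is definable by a single quantifier-free formula: there is a
quantifier-free formula `α` such that for every `L`-structure `M'` and tuple `u`,
`M' ⊨ α(u)` iff there is a local isomorphism from `v` to `u`. -/
theorem exists_qf_formula_defining_local_symmetry_class {L : Language}
    [Finite (Σ n, L.Functions n)] [Finite (Σ n, L.Relations n)]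
    {M : Type*} [L.Structure M] {k : ℕ} (v : Fin k → M)
    (hfin : ((closure L (Set.range v) : L.Substructure M) : Set M).Finite) :
    ∃ α : L.Formula (Fin k), α.IsQF ∧
      ∀ (M' : Type w) [L.Structure M'] (u : Fin k → M'),
        α.Realize u ↔
          ∃ β : (closure L (Set.range v)) ≃[L] (closure L (Set.range u)),
            ∀ i : Fin k, (β ⟨v i, subset_closure (Set.mem_range_self i)⟩ : M') = u i := by
  classical
  -- every element of the closure is the realization of a term
  have hterm : ∀ x ∈ closure L (Set.range v), ∃ t : L.Term (Fin k), t.realize v = x := by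
    intro x hx
    obtain ⟨t, ht⟩ := mem_closure_iff_exists_term.1 hx
    have hr : ∀ y : ↥(Set.range v), ∃ i, v i = (y : M) := fun y => y.2
    choose r hr using hr
    refine ⟨t.relabel r, ?_⟩
    rw [Term.realize_relabel, ← ht]
    congr 1
    ext y
    exact hr y
  choose t0 ht0 using hterm
  have hmemv : ∀ t : L.Term (Fin k), t.realize v ∈ closure L (Set.range v) := fun t =>
    t.realize_mem v fun i => subset_closure (Set.mem_range_self i)
  -- the finite set of terms
  let T : Finset (L.Term (Fin k)) :=
    (hfin.toFinset.attach.image fun x => t0 x.1 (by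
      have hx := x.2; rw [Set.Finite.mem_toFinset] at hx; exact hx)) ∪
    (Finset.univ.image fun i : Fin k => Term.var i)
  have hT0 : ∀ (x : M) (hx : x ∈ closure L (Set.range v)), t0 x hx ∈ T := by
    intro x hx
    refine Finset.mem_union_left _ (Finset.mem_image.2
      ⟨⟨x, Set.Finite.mem_toFinset hfin |>.2 hx⟩, Finset.mem_attach _ _, rfl⟩)
  have hTvar : ∀ i : Fin k, Term.var i ∈ T := fun i =>
    Finset.mem_union_right _ (Finset.mem_image.2 ⟨i, Finset.mem_univ i, rfl⟩)
  haveI : Fintype (Σ n, L.Functions n) := Fintype.ofFinite _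
  haveI : Fintype (Σ n, L.Relations n) := Fintype.ofFinite _
  -- the formulas
  let eqF : L.Term (Fin k) × L.Term (Fin k) → L.Formula (Fin k) := fun p =>
    if p.1.realize v = p.2.realize v then p.1.equal p.2 else (p.1.equal p.2).not
  let funF : (Σ p : (Σ n, L.Functions n), Fin p.1 → ↥T) → L.Formula (Fin k) := fun q =>
    (Term.func q.1.2 fun i => ((q.2 i : L.Term (Fin k)))).equal
      (t0 ((Term.func q.1.2 fun i => ((q.2 i : L.Term (Fin k)))).realize v) (hmemv _))
  let relF : (Σ p : (Σ n, L.Relations n), Fin p.1 → ↥T) → L.Formula (Fin k) := fun q =>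
    if Structure.RelMap q.1.2 (fun i => ((q.2 i : L.Term (Fin k))).realize v)
    then q.1.2.formula fun i => (q.2 i : L.Term (Fin k))
    else (q.1.2.formula fun i => (q.2 i : L.Term (Fin k))).not
  refine ⟨LocalSym.finsetInf (T ×ˢ T) eqF ⊓
      (LocalSym.finsetInf Finset.univ funF ⊓ LocalSym.finsetInf Finset.univ relF), ?_, ?_⟩
  · refine (LocalSym.isQF_iInf _ _ ?_).inf
      ((LocalSym.isQF_iInf _ _ ?_).inf (LocalSym.isQF_iInf _ _ ?_))
    · intro p
      show BoundedFormula.IsQF (if p.1.realize v = p.2.realize v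
        then p.1.equal p.2 else (p.1.equal p.2).not)
      split_ifs
      · exact LocalSym.isQF_equal _ _
      · exact (LocalSym.isQF_equal _ _).not
    · intro q
      exact LocalSym.isQF_equal _ _
    · intro q
      show BoundedFormula.IsQF (if Structure.RelMap q.1.2 (fun i => ((q.2 i : L.Term (Fin k))).realize v)
        then q.1.2.formula fun i => (q.2 i : L.Term (Fin k))
        else (q.1.2.formula fun i => (q.2 i : L.Term (Fin k))).not)
      split_ifs
      · exact LocalSym.isQF_rel _ _
      · exact (LocalSym.isQF_rel _ _).not
  intro M' _ u
  have hmemu : ∀ t : L.Term (Fin k), t.realize u ∈ closure L (Set.range u) := fun t =>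
    t.realize_mem u fun i => subset_closure (Set.mem_range_self i)
  -- unpack the semantics of the formula
  rw [Formula.realize_inf, Formula.realize_inf, LocalSym.realize_iInf', LocalSym.realize_iInf',
    LocalSym.realize_iInf']
  have eqsem : (∀ p ∈ T ×ˢ T, Formula.Realize (eqF p) u) ↔
      ∀ s ∈ T, ∀ t ∈ T, ((Term.realize u s = Term.realize u t) ↔
        (Term.realize v s = Term.realize v t)) := by
    constructor
    · intro h s hs t ht
      have h2 : Formula.Realize (if Term.realize v s = Term.realize v t
          then s.equal t else (s.equal t).not) u := h (s, t) (Finset.mem_product.2 ⟨hs, ht⟩)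
      split_ifs at h2 with hv
      · rw [Formula.realize_equal] at h2; exact iff_of_true h2 hv
      · rw [Formula.realize_not, Formula.realize_equal] at h2; exact iff_of_false h2 hv
    · intro h p hp
      obtain ⟨hs, ht⟩ := Finset.mem_product.1 hp
      show Formula.Realize (if Term.realize v p.1 = Term.realize v p.2
          then p.1.equal p.2 else (p.1.equal p.2).not) u
      split_ifs with hv
      · rw [Formula.realize_equal]; exact (h _ hs _ ht).2 hv
      · rw [Formula.realize_not, Formula.realize_equal]
        exact fun hc => hv ((h _ hs _ ht).1 hc)
  have funsem : (∀ q ∈ (Finset.univ : Finset (Σ p : (Σ n, L.Functions n), Fin p.1 → ↥T)),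
      Formula.Realize (funF q) u) ↔
      ∀ (p : Σ n, L.Functions n) (g : Fin p.1 → ↥T),
        (Term.func p.2 fun i => ((g i : L.Term (Fin k)))).realize u
          = (t0 ((Term.func p.2 fun i => ((g i : L.Term (Fin k)))).realize v)
              (hmemv _)).realize u := by
    constructor
    · intro h p g
      have h2 := h ⟨p, g⟩ (Finset.mem_univ _)
      rw [show funF ⟨p, g⟩ = _ from rfl, Formula.realize_equal] at h2
      exact h2
    · intro h q _
      rw [show funF q = _ from rfl, Formula.realize_equal]
      exact h q.1 q.2
  have relsem : (∀ q ∈ (Finset.univ : Finset (Σ p : (Σ n, L.Relations n), Fin p.1 → ↥T)),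
      Formula.Realize (relF q) u) ↔
      ∀ (p : Σ n, L.Relations n) (g : Fin p.1 → ↥T),
        (Structure.RelMap p.2 fun i => ((g i : L.Term (Fin k))).realize u)
          ↔ Structure.RelMap p.2 fun i => ((g i : L.Term (Fin k))).realize v := by
    constructor
    · intro h p g
      have h2 : Formula.Realize (if Structure.RelMap p.2 (fun i => ((g i : L.Term (Fin k))).realize v)
          then p.2.formula fun i => (g i : L.Term (Fin k))
          else (p.2.formula fun i => (g i : L.Term (Fin k))).not) u :=
        h ⟨p, g⟩ (Finset.mem_univ _)
      split_ifs at h2 with hv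
      · rw [Formula.realize_rel] at h2; exact iff_of_true h2 hv
      · rw [Formula.realize_not, Formula.realize_rel] at h2; exact iff_of_false h2 hv
    · intro h q _
      show Formula.Realize (if Structure.RelMap q.1.2 (fun i => ((q.2 i : L.Term (Fin k))).realize v)
          then q.1.2.formula fun i => (q.2 i : L.Term (Fin k))
          else (q.1.2.formula fun i => (q.2 i : L.Term (Fin k))).not) u
      split_ifs with hv
      · rw [Formula.realize_rel]; exact (h q.1 q.2).2 hv
      · rw [Formula.realize_not, Formula.realize_rel]
        exact fun hc => hv ((h q.1 q.2).1 hc)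
  rw [eqsem, funsem, relsem]
  constructor
  · rintro ⟨HA, HB, HC⟩
    have hcongr : ∀ (a b : M) (ha : a ∈ closure L (Set.range v))
        (hb : b ∈ closure L (Set.range v)), a = b →
        (t0 a ha).realize u = (t0 b hb).realize u := by
      rintro a b ha hb rfl; rfl
    let F : ↥(closure L (Set.range v)) → ↥(closure L (Set.range u)) := fun x =>
      ⟨(t0 x.1 x.2).realize u, hmemu _⟩
    have hFinj : Function.Injective F := by
      intro x y hxy
      apply Subtype.ext
      have h2 := (HA _ (hT0 x.1 x.2) _ (hT0 y.1 y.2)).1 (congrArg Subtype.val hxy)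
      rwa [ht0, ht0] at h2
    have hFT : ∀ (t : L.Term (Fin k)), t ∈ T → ∀ h : t.realize v ∈ closure L (Set.range v),
        (F ⟨t.realize v, h⟩ : M') = t.realize u := by
      intro t ht h
      exact (HA _ (hT0 _ _) t ht).2 (ht0 _ _)
    let S' : L.Substructure M' :=
      { carrier := Set.range fun x : ↥(closure L (Set.range v)) => (F x : M')
        fun_mem := by
          intro n f w hw
          choose x hx using hw
          refine ⟨⟨(Term.func f fun i => t0 (x i).1 (x i).2).realize v, hmemv _⟩, ?_⟩
          have h2 := HB ⟨n, f⟩ (fun i => ⟨t0 (x i).1 (x i).2, hT0 _ _⟩)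
          show (t0 _ _).realize u = _
          rw [← h2]
          show Structure.funMap f (fun i => (t0 (x i).1 (x i).2).realize u)
            = Structure.funMap f w
          congr 1
          funext i
          exact hx i }
    have hrange : ∀ z : M', z ∈ closure L (Set.range u) →
        z ∈ Set.range fun x : ↥(closure L (Set.range v)) => (F x : M') := by
      intro z hz
      have hle : closure L (Set.range u) ≤ S' := by
        rw [closure_le]
        rintro z' ⟨i, rfl⟩
        exact ⟨⟨v i, subset_closure (Set.mem_range_self i)⟩,
          hFT (Term.var i) (hTvar i) _⟩
      exact hle hz
    have hFsurj : Function.Surjective F := by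
      intro z
      obtain ⟨x, hx⟩ := hrange z z.2
      exact ⟨x, Subtype.ext hx⟩
    refine ⟨{ toEquiv := Equiv.ofBijective F ⟨hFinj, hFsurj⟩
              map_fun' := ?_
              map_rel' := ?_ }, ?_⟩
    · intro n f x
      apply Subtype.ext
      show (t0 (Structure.funMap f x : ↥(closure L (Set.range v))).1
          (Structure.funMap f x : ↥(closure L (Set.range v))).2).realize u
        = ((Structure.funMap f fun i => F (x i) : ↥(closure L (Set.range u))) : M')
      have hy : (Term.func f fun i => t0 (x i).1 (x i).2).realize v
          = (Structure.funMap f x : ↥(closure L (Set.range v))).1 := by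
        show Structure.funMap f (fun i => (t0 (x i).1 (x i).2).realize v)
          = Structure.funMap f fun i => (x i).1
        congr 1
        funext i
        exact ht0 _ _
      rw [hcongr _ _ _ (hmemv _) hy.symm]
      rw [← HB ⟨n, f⟩ (fun i => ⟨t0 (x i).1 (x i).2, hT0 _ _⟩)]
      rfl
    · intro n r x
      show Structure.RelMap r (fun i => ((t0 (x i).1 (x i).2).realize u : M'))
        ↔ Structure.RelMap r (fun i => ((x i : M)))
      have e : (fun i => (t0 (x i).1 (x i).2).realize v) = fun i => ((x i : M)) :=
        funext fun i => ht0 _ _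
      rw [← e]
      exact HC ⟨n, r⟩ (fun i => ⟨t0 (x i).1 (x i).2, hT0 _ _⟩)
    · intro i
      exact hFT (Term.var i) (hTvar i) _
  · rintro ⟨β, hβ⟩
    have key : ∀ t : L.Term (Fin k), (β ⟨t.realize v, hmemv t⟩ : M') = t.realize u := by
      intro t
      let v' : Fin k → ↥(closure L (Set.range v)) := fun i =>
        ⟨v i, subset_closure (Set.mem_range_self i)⟩
      let u' : Fin k → ↥(closure L (Set.range u)) := fun i =>
        ⟨u i, subset_closure (Set.mem_range_self i)⟩
      have h1 : (⟨t.realize v, hmemv t⟩ : ↥(closure L (Set.range v))) = t.realize v' := by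
        apply Subtype.ext
        exact HomClass.realize_term (closure L (Set.range v)).subtype
          (t := t) (v := v')
      have e1 : ⇑β ∘ v' = u' := funext fun i => Subtype.ext (hβ i)
      have h3 : β (t.realize v') = t.realize u' :=
        ((HomClass.realize_term β (t := t) (v := v')).symm).trans (by rw [e1])
      rw [h1, h3]
      exact (HomClass.realize_term (closure L (Set.range u)).subtype
        (t := t) (v := u')).symm
    refine ⟨fun s _ t _ => ?_, fun p g => ?_, fun p g => ?_⟩
    · constructor
      · intro h
        have h2 : β ⟨Term.realize v s, hmemv s⟩ = β ⟨Term.realize v t, hmemv t⟩ :=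
          Subtype.ext (by rw [key, key]; exact h)
        exact congrArg Subtype.val ((EquivLike.injective β) h2)
      · intro h
        rw [← key s, ← key t]
        exact congrArg (fun z => (β z : M')) (Subtype.ext h)
    · rw [← key (Term.func p.2 fun i => (g i : L.Term (Fin k))),
        ← key (t0 ((Term.func p.2 fun i => (g i : L.Term (Fin k))).realize v) (hmemv _))]
      exact congrArg (fun z => (β z : M')) (Subtype.ext (ht0 _ _).symm)
    · have e : (fun i => ((g i : L.Term (Fin k)).realize u))
          = fun i => (β ⟨(g i : L.Term (Fin k)).realize v, hmemv _⟩ : M') :=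
        funext fun i => (key _).symm
      rw [e]
      exact β.map_rel' p.2 (fun i => ⟨(g i : L.Term (Fin k)).realize v, hmemv _⟩)
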